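/- (Soundness of Reduction Rule 5 for Cut-MWBS.) Let (G, w, ℰ) be an instance of Cut-MWBS in which the good vertices are pairwise non-adjacent and every good vertex is incident to exactly one dart. Let v be a bad vertex, S a good edge-section of v, and let ℰ_in, ℰ_out ∈ ℰ be parts with ℰ_in, ℰ_out ⊆ S such that: every edge of ℰ_in is directed into v, every edge of ℰ_out is directed out of v, the darts at v of ℰ_in ∪ ℰ_out form a consecutive arc within S, and at least one of ℰ_in, ℰ_out does not itself form a consecutive arc within S. Assume moreover that there exists a feasible F for (G, w, ℰ) of maximum weight containing at most one of the parts ℰ_in, ℰ_out. Let (G', w', ℰ') be obtained by replacing, in the cyclic ordering at v, the arc of darts of ℰ_in ∪ ℰ_out by four new edges e₁, e₂, e₃, e₄ in this consecutive order, where e₁ and e₃ are directed into v, e₂ and e₄ are directed out of v, each e_k joins v to a fresh pendant vertex, w'(e₁) = w'(e₄) = 0, w'(e₂) = ∑_{f ∈ ℰ_out} w(f), w'(e₃) = ∑_{f ∈ ℰ_in} w(f), w' = w on all other edges, and the parts ℰ_in and ℰ_out of ℰ are replaced by the parts {e₁, e₃} and {e₂, e₄} respectively. Then Cut-MBW(G',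 w', ℰ') = Cut-MBW(G, w, ℰ). -/

import Mathlib

open scoped Classical

/-- An embedded digraph: a finite edge set `edges` within an ambient type `E`,
maps `tail, head : E → V` with `tail e ≠ head e` for edges, and for each vertex a
cyclic ordering `rot v` (a list, considered up to rotation) containing exactly once
each dart at `v`.  A dart is a pair `(e, b)` where `b = true` marks the in-dart
(with `head e = v`) and `b = false` the out-dart (with `tail e = v`). -/
structure EmbDigraph (V : Type*) (E : Type*) where
  edges : Finset E
  tail : E → V
  head : E → V
  tail_ne_head : ∀ e ∈ edges, tail e ≠ head e
  rot : V → List (E × Bool)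
  rot_nodup : ∀ u : V, (rot u).Nodup
  mem_rot : ∀ (u : V) (d : E × Bool),
    d ∈ rot u ↔ d.1 ∈ edges ∧ ((d.2 = true ∧ head d.1 = u) ∨ (d.2 = false ∧ tail d.1 = u))

namespace EmbDigraph

variable {V : Type*} {E : Type*}

/-- A list of booleans consisting of a block of `true`s followed by a block of
`false`s: all in-darts precede all out-darts. -/
def IsTwoBlock (l : List Bool) : Prop :=
  ∃ a b : ℕ, l = List.replicate a true ++ List.replicate b false

/-- Vertex `u` is bimodal in the spanning subgraph `G[F]`: some rotation of its
dart list, restricted to the darts of edges in `F`, has all in-darts preceding all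
out-darts. -/
def VertexBimodalIn (G : EmbDigraph V E) (F : Finset E) (u : V) : Prop :=
  ∃ n : ℕ,
    IsTwoBlock ((((G.rot u).rotate n).filter fun d => decide (d.1 ∈ F)).map Prod.snd)

/-- The spanning subgraph `G[F]` is bimodal: every vertex is bimodal in it. -/
def BimodalIn (G : EmbDigraph V E) (F : Finset E) : Prop :=
  ∀ u : V, G.VertexBimodalIn F u

/-- A vertex is good if it is bimodal in `G` itself; otherwise it is bad. -/
def Good (G : EmbDigraph V E) (u : V) : Prop :=
  G.VertexBimodalIn G.edges u

/-- `m` is the maximum weight `MBW(G, w)` of a bimodal spanning subgraph of `G`. -/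
def IsMBW (G : EmbDigraph V E) (w : E → ℚ) (m : ℚ) : Prop :=
  IsGreatest {x : ℚ | ∃ F : Finset E, F ⊆ G.edges ∧ G.BimodalIn F ∧ ∑ e ∈ F, w e = x} m

end EmbDigraph

namespace EmbDigraph

variable {V : Type*} {E : Type*}

/-- The darts at `v` of the edges of `S` form a consecutive arc in the cyclic
ordering at `v`. -/
def ArcAt (G : EmbDigraph V E) (v : V) (S : Set E) : Prop :=
  ∃ n k : ℕ, ∀ d ∈ G.rot v, (d ∈ ((G.rot v).rotate n).take k ↔ d.1 ∈ S)

/-- `T ⊆ S` and the darts at `v` of the edges of `T` form a consecutive arc within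
the arc formed by the darts of `S` in the cyclic ordering at `v`. -/
def ArcWithin (G : EmbDigraph V E) (v : V) (S T : Set E) : Prop :=
  T ⊆ S ∧ ∃ n k a b : ℕ, a ≤ b ∧ b ≤ k ∧
    (∀ d ∈ G.rot v, (d ∈ ((G.rot v).rotate n).take k ↔ d.1 ∈ S)) ∧
    (∀ d ∈ G.rot v, (d ∈ (((G.rot v).rotate n).take b).drop a ↔ d.1 ∈ T))

/-- `S` is a set of edges incident to `v` whose darts at `v` form a consecutive arc
in the cyclic ordering at `v` and such that the endpoint other than `v` of every
edge of `S` is good. -/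
def SectionProps (G : EmbDigraph V E) (v : V) (S : Set E) : Prop :=
  S ⊆ ↑G.edges ∧ (∀ e ∈ S, G.tail e = v ∨ G.head e = v) ∧
    (∀ e ∈ S, G.Good (if G.tail e = v then G.head e else G.tail e)) ∧
    G.ArcAt v S

/-- A good edge-section of `v`: a maximal set of edges incident to `v` whose darts
at `v` form a consecutive arc and whose other endpoints are all good. -/
def GoodEdgeSection (G : EmbDigraph V E) (v : V) (S : Set E) : Prop :=
  G.SectionProps v S ∧ ∀ S' : Set E, S ⊆ S' → G.SectionProps v S' → S' = S

end EmbDigraph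

namespace EmbDigraph

variable {V : Type*} {E : Type*}

/-- `𝓔` is a partition of the edge set of `G` into nonempty parts. -/
def IsEdgePartition (G : EmbDigraph V E) (𝓔 : Finset (Finset E)) : Prop :=
  (∀ P ∈ 𝓔, P.Nonempty ∧ P ⊆ G.edges) ∧
    (∀ P ∈ 𝓔, ∀ Q ∈ 𝓔, P ≠ Q → Disjoint P Q) ∧
    (∀ e ∈ G.edges, ∃ P ∈ 𝓔, e ∈ P)

/-- `F` is feasible for the Cut-MWBS instance `(G, w, 𝓔)`: `F` is a union of parts
of `𝓔` and `G[F]` is bimodal. -/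
def CutFeasible (G : EmbDigraph V E) (𝓔 : Finset (Finset E)) (F : Finset E) : Prop :=
  F ⊆ G.edges ∧ (∀ P ∈ 𝓔, P ⊆ F ∨ Disjoint P F) ∧ G.BimodalIn F

/-- `m` is the maximum weight `Cut-MBW(G, w, 𝓔)` over feasible sets of the
Cut-MWBS instance `(G, w, 𝓔)`. -/
def IsCutMBW (G : EmbDigraph V E) (w : E → ℚ) (𝓔 : Finset (Finset E)) (m : ℚ) : Prop :=
  IsGreatest {x : ℚ | ∃ F : Finset E, G.CutFeasible 𝓔 F ∧ ∑ e ∈ F, w e = x} m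

end EmbDigraph

open EmbDigraph

section CRGHelpers

variable {α β : Type*}

/-- Cyclic two-block predicate. -/
def CTB (l : List Bool) : Prop := ∃ n, IsTwoBlock (l.rotate n)

lemma crg_isTwoBlock_len_le_one : ∀ {l : List Bool}, l.length ≤ 1 → IsTwoBlock l
  | [], _ => ⟨0, 0, rfl⟩
  | [true], _ => ⟨1, 0, rfl⟩
  | [false], _ => ⟨0, 1, rfl⟩

lemma crg_ctb_of_rotate {l : List Bool} {k : ℕ} (h : CTB (l.rotate k)) : CTB l := by
  obtain ⟨n, h⟩ := h
  exact ⟨k + n, by rwa [List.rotate_rotate] at h⟩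

lemma crg_ctb_rotate (l : List Bool) (k : ℕ) : CTB (l.rotate k) ↔ CTB l := by
  refine ⟨crg_ctb_of_rotate, fun h => ?_⟩
  rcases Nat.eq_zero_or_pos l.length with hl | hl
  · have : l = [] := List.eq_nil_of_length_eq_zero hl
    subst this; simpa using h
  · have hk : k % l.length < l.length := Nat.mod_lt _ hl
    have hdm := Nat.div_add_mod k l.length
    have hkk : k + (l.length - k % l.length) = l.length * (k / l.length + 1) := by
      calc k + (l.length - k % l.length)
          = l.length * (k / l.length) + (k % l.length + (l.length - k % l.length)) := by
            rw [← Nat.add_assoc, hdm]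
        _ = l.length * (k / l.length) + l.length := by rw [Nat.add_sub_cancel' hk.le]
        _ = l.length * (k / l.length + 1) := by ring
    have hrot : (l.rotate k).rotate (l.length - k % l.length) = l := by
      rw [List.rotate_rotate, hkk, List.rotate_length_mul]
    exact crg_ctb_of_rotate (l := l.rotate k) (hrot.symm ▸ h)

lemma crg_filter_rotate (p : α → Bool) (l : List α) (n : ℕ) :
    ∃ m, (l.rotate n).filter p = (l.filter p).rotate m := by
  rcases Nat.eq_zero_or_pos l.length with hl | hl
  · have : l = [] := List.eq_nil_of_length_eq_zero hl
    subst this; exact ⟨0, by simp⟩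
  · refine ⟨((l.take (n % l.length)).filter p).length, ?_⟩
    have h1 : n % l.length ≤ l.length := (Nat.mod_lt _ hl).le
    have key : ∀ X Y : List α, l = X ++ Y →
        (l.filter p).rotate ((X.filter p).length) = Y.filter p ++ X.filter p := by
      rintro X Y rfl
      rw [List.filter_append]
      exact List.rotate_append_length_eq _ _
    rw [← List.rotate_mod, List.rotate_eq_drop_append_take h1, List.filter_append,
      key (l.take (n % l.length)) (l.drop (n % l.length)) (List.take_append_drop _ l).symm]

lemma crg_exists_take_filter_length (p : α → Bool) (l : List α) :
    ∀ (m : ℕ), m ≤ (l.filter p).length → ∃ n ≤ l.length, ((l.take n).filter p).length = m := by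
  induction l with
  | nil => intro m h; simp at h; exact ⟨0, by simp, by simp [h]⟩
  | cons a t ih =>
    intro m h
    by_cases hp : p a
    · cases m with
      | zero => exact ⟨0, Nat.zero_le _, by simp⟩
      | succ m' =>
        have h' : m' ≤ (t.filter p).length := by
          simp only [List.filter_cons, if_pos hp, List.length_cons] at h; omega
        obtain ⟨n, hn, hfn⟩ := ih m' h'
        refine ⟨n + 1, by simpa using hn, ?_⟩
        simp only [List.take_succ_cons, List.filter_cons, if_pos hp, List.length_cons, hfn]
    · have h' : m ≤ (t.filter p).length := by
        simpa only [List.filter_cons, if_neg hp] using h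
      obtain ⟨n, hn, hfn⟩ := ih m h'
      refine ⟨n + 1, by simpa using hn, ?_⟩
      simpa only [List.take_succ_cons, List.filter_cons, if_neg hp] using hfn

lemma crg_rotate_filter (p : α → Bool) (l : List α) (m : ℕ) :
    ∃ n, (l.rotate n).filter p = (l.filter p).rotate m := by
  rcases Nat.eq_zero_or_pos (l.filter p).length with hl | hl
  · have h0 : l.filter p = [] := List.eq_nil_of_length_eq_zero hl
    refine ⟨0, by rw [List.rotate_zero, h0, List.rotate_nil]⟩
  · have hm' : m % (l.filter p).length ≤ (l.filter p).length := (Nat.mod_lt _ hl).le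
    obtain ⟨n, hn, hfn⟩ := crg_exists_take_filter_length p l (m % (l.filter p).length) hm'
    refine ⟨n, ?_⟩
    have key : ∀ X Y : List α, l = X ++ Y →
        (l.filter p).rotate ((X.filter p).length) = Y.filter p ++ X.filter p := by
      rintro X Y rfl
      rw [List.filter_append]
      have : ((X ++ Y).filter p).length = (X.filter p ++ Y.filter p).length := by
        rw [List.filter_append]
      exact List.rotate_append_length_eq _ _
    rw [List.rotate_eq_drop_append_take hn, List.filter_append, ← List.rotate_mod, ← hfn,
      key (l.take n) (l.drop n) (List.take_append_drop n l).symm]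

lemma crg_vertexBimodalIn_iff {V E : Type*} (G : EmbDigraph V E) (F : Finset E) (u : V) :
    G.VertexBimodalIn F u ↔
      CTB (((G.rot u).filter fun d => decide (d.1 ∈ F)).map Prod.snd) := by
  constructor
  · rintro ⟨n, h⟩
    obtain ⟨m, hm⟩ := crg_filter_rotate (fun d => decide (d.1 ∈ F)) (G.rot u) n
    rw [hm, List.map_rotate] at h
    exact ⟨m, h⟩
  · rintro ⟨m, h⟩
    obtain ⟨n, hn⟩ := crg_rotate_filter (fun d => decide (d.1 ∈ F)) (G.rot u) m
    exact ⟨n, by rw [hn, List.map_rotate]; exact h⟩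

lemma crg_vertexBimodalIn_iff' {V E : Type*} (G : EmbDigraph V E) (F : Finset E) (u : V)
    (p : E × Bool → Bool) (hp : ∀ d : E × Bool, p d = decide (d.1 ∈ F)) :
    G.VertexBimodalIn F u ↔ CTB (((G.rot u).filter p).map Prod.snd) := by
  rw [crg_vertexBimodalIn_iff, List.filter_congr (fun d _ => (hp d).symm)]

lemma crg_isTwoBlock_drop {l : List Bool} (h : IsTwoBlock l) (k : ℕ) :
    IsTwoBlock (l.drop k) := by
  obtain ⟨a, b, rfl⟩ := h
  refine ⟨a - k, b - (k - a), ?_⟩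
  rw [List.drop_append, List.drop_replicate, List.drop_replicate,
    List.length_replicate]

lemma crg_isTwoBlock_take {l : List Bool} (h : IsTwoBlock l) (k : ℕ) :
    IsTwoBlock (l.take k) := by
  obtain ⟨a, b, rfl⟩ := h
  refine ⟨min k a, min (k - a) b, ?_⟩
  rw [List.take_append, List.take_replicate, List.take_replicate,
    List.length_replicate]

lemma crg_isTwoBlock_true_mid : ∀ (X Y : List Bool), IsTwoBlock (X ++ true :: Y) →
    ∀ x ∈ X, x = true := by
  intro X
  induction X with
  | nil => simp
  | cons a X ih =>
    rintro Y ⟨p, q, hpq⟩ x hx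
    cases p with
    | zero =>
      exfalso
      have h1 : (true : Bool) ∈ List.replicate 0 true ++ List.replicate q false := by
        rw [← hpq]; simp
      simp only [List.replicate_zero, List.nil_append] at h1
      simpa using List.eq_of_mem_replicate h1
    | succ p =>
      rw [List.replicate_succ] at hpq
      simp only [List.cons_append] at hpq
      injection hpq with h1 h2
      rcases List.mem_cons.mp hx with rfl | hx'
      · exact h1
      · exact ih Y ⟨p, q, h2⟩ x hx'

/-- A list whose drop is all-true and whose take is two-block. -/
def TTail (L : List Bool) : Prop :=
  ∃ m ≤ L.length, (∀ x ∈ L.drop m, x = true) ∧ IsTwoBlock (L.take m)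

lemma crg_ctb_of_ttail (a : ℕ) {L : List Bool} (h : TTail L) :
    CTB (List.replicate a true ++ L) := by
  obtain ⟨m, hm, hdrop, htake⟩ := h
  refine ⟨a + m, ?_⟩
  have hlen : a + m ≤ (List.replicate a true ++ L).length := by simp; omega
  rw [List.rotate_eq_drop_append_take hlen]
  have hd : (List.replicate a true ++ L).drop (a + m) = L.drop m := by
    rw [List.drop_append, List.drop_replicate, List.length_replicate]
    simp
  have ht : (List.replicate a true ++ L).take (a + m) = List.replicate a true ++ L.take m := by
    rw [List.take_append, List.take_replicate, List.length_replicate]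
    congr 2
    · omega
    · congr 1; omega
  obtain ⟨s, q, hsq⟩ := htake
  refine ⟨(L.drop m).length + a + s, q, ?_⟩
  rw [hd, ht, hsq, List.eq_replicate_length.mpr hdrop]
  rw [List.replicate_add, List.replicate_add]
  simp only [List.append_assoc]
  simp

lemma crg_ttail_of_ctb {a : ℕ} (ha : 0 < a) {L : List Bool}
    (h : CTB (List.replicate a true ++ L)) : TTail L := by
  obtain ⟨n, hn⟩ := h
  have hlen : 0 < (List.replicate a true ++ L).length := by simp; omega
  rw [← List.rotate_mod] at hn
  have hn'len : n % (List.replicate a true ++ L).length ≤ (List.replicate a true ++ L).length :=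
    (Nat.mod_lt _ hlen).le
  set n' := n % (List.replicate a true ++ L).length with hn'def
  have hn'len2 : n' ≤ a + L.length := by simpa using hn'len
  rw [List.rotate_eq_drop_append_take hn'len] at hn
  by_cases hcase : n' ≤ a
  · have hd : (List.replicate a true ++ L).drop n' = List.replicate (a - n') true ++ L := by
      rw [List.drop_append, List.drop_replicate, List.length_replicate]
      rw [Nat.sub_eq_zero_of_le hcase, List.drop_zero]
    have ht : (List.replicate a true ++ L).take n' = List.replicate n' true := by
      rw [List.take_append, List.take_replicate, List.length_replicate,
        Nat.sub_eq_zero_of_le hcase, List.take_zero, List.append_nil, min_eq_left hcase]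
    rw [hd, ht] at hn
    have h2 : IsTwoBlock (L ++ List.replicate n' true) := by
      have h3 := crg_isTwoBlock_drop hn (a - n')
      rwa [List.append_assoc, List.drop_left' (by simp)] at h3
    have h3 : IsTwoBlock L := by
      have h4 := crg_isTwoBlock_take h2 L.length
      rwa [List.take_left] at h4
    exact ⟨L.length, le_rfl, by simp, by rw [List.take_length]; exact h3⟩
  · push_neg at hcase
    have hmL : n' - a ≤ L.length := by omega
    have hd : (List.replicate a true ++ L).drop n' = L.drop (n' - a) := by
      rw [List.drop_append, List.drop_replicate, List.length_replicate,
        Nat.sub_eq_zero_of_le hcase.le, List.replicate_zero, List.nil_append]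
    have ht : (List.replicate a true ++ L).take n' =
        List.replicate a true ++ L.take (n' - a) := by
      rw [List.take_append, List.take_replicate, List.length_replicate,
        min_eq_right hcase.le]
    rw [hd, ht] at hn
    refine ⟨n' - a, hmL, ?_, ?_⟩
    · obtain ⟨a', rfl⟩ := Nat.exists_eq_succ_of_ne_zero ha.ne'
      rw [List.replicate_succ, List.cons_append] at hn
      exact crg_isTwoBlock_true_mid _ _ hn
    · have h4 := crg_isTwoBlock_drop hn ((L.drop (n' - a)).length + a)
      have e : (L.drop (n' - a) ++ (List.replicate a true ++ L.take (n' - a))).drop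
          ((L.drop (n' - a)).length + a) = L.take (n' - a) := by
        rw [← List.append_assoc]
        have hlen2 : (L.drop (n' - a)).length + a =
            (L.drop (n' - a) ++ List.replicate a true).length := by simp
        rw [hlen2, List.drop_left]
      rwa [e] at h4

lemma crg_ctb_rep_true_iff {a b : ℕ} (ha : 0 < a) (hb : 0 < b) (L : List Bool) :
    CTB (List.replicate a true ++ L) ↔ CTB (List.replicate b true ++ L) :=
  ⟨fun h => crg_ctb_of_ttail b (crg_ttail_of_ctb ha h),
   fun h => crg_ctb_of_ttail a (crg_ttail_of_ctb hb h)⟩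

lemma crg_ctb_append_comm (X Y : List Bool) (h : CTB (X ++ Y)) : CTB (Y ++ X) := by
  have h2 := (crg_ctb_rotate (X ++ Y) X.length).mpr h
  rwa [List.rotate_append_length_eq] at h2

lemma crg_ctb_map_not_of {l : List Bool} (h : CTB l) : CTB (l.map not) := by
  obtain ⟨n, p, q, hn⟩ := h
  refine crg_ctb_of_rotate (l := l.map not) (k := n) ?_
  rw [← List.map_rotate, hn, List.map_append, List.map_replicate, List.map_replicate]
  simp only [Bool.not_true, Bool.not_false]
  exact crg_ctb_append_comm _ _ ⟨0, q, p, by rw [List.rotate_zero]⟩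

lemma crg_ctb_map_not (l : List Bool) : CTB (l.map not) ↔ CTB l := by
  constructor
  · intro h
    have h2 := crg_ctb_map_not_of h
    have h3 : (l.map not).map not = l := by simp [List.map_map, Function.comp_def, Bool.not_not]
    rwa [h3] at h2
  · exact crg_ctb_map_not_of

lemma crg_ctb_rep_iff (x : Bool) {a b : ℕ} (ha : 0 < a) (hb : 0 < b) (L : List Bool) :
    CTB (List.replicate a x ++ L) ↔ CTB (List.replicate b x ++ L) := by
  cases x
  · rw [← crg_ctb_map_not (List.replicate a false ++ L),
      ← crg_ctb_map_not (List.replicate b false ++ L)]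
    simp only [List.map_append, List.map_replicate, Bool.not_false]
    exact crg_ctb_rep_true_iff ha hb _
  · exact crg_ctb_rep_true_iff ha hb L

lemma crg_not_isTwoBlock_ft (Z : List Bool) : ¬ IsTwoBlock (false :: true :: Z) := by
  rintro ⟨p, q, h⟩
  cases p with
  | zero =>
    simp only [List.replicate_zero, List.nil_append] at h
    have h1 : (true : Bool) ∈ List.replicate q false := by rw [← h]; simp
    simpa using List.eq_of_mem_replicate h1
  | succ p =>
    rw [List.replicate_succ] at h
    simp at h

lemma crg_not_ctb_tftf (L : List Bool) : ¬ CTB ([true, false, true, false] ++ L) := by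
  intro h
  have h1 : CTB (List.replicate 1 true ++ ([false, true, false] ++ L)) := by
    simpa using h
  obtain ⟨m, hm, hdrop, htake⟩ := crg_ttail_of_ctb one_pos h1
  match m, hdrop, htake with
  | 0, hdrop, _ => simpa using hdrop false (by simp)
  | 1, hdrop, _ => simpa using hdrop false (by simp)
  | (m' + 2), _, htake =>
    rw [show ([false, true, false] ++ L) = false :: true :: ([false] ++ L) by simp,
      List.take_succ_cons, List.take_succ_cons] at htake
    exact crg_not_isTwoBlock_ft _ htake

lemma crg_length_le_one_of_all_eq {l : List α} (h : l.Nodup) {c : α}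
    (hc : ∀ x ∈ l, x = c) : l.length ≤ 1 := by
  match l with
  | [] => simp
  | [_] => simp
  | a :: b :: t =>
    exfalso
    have ha := hc a (by simp)
    have hb := hc b (by simp)
    exact (List.nodup_cons.mp h).1 (by rw [ha.trans hb.symm]; exact List.mem_cons_self)

end CRGHelpers

/-- Soundness of Reduction Rule 5 for Cut-MWBS: two parts `ℰ_in` (all edges into
`v`) and `ℰ_out` (all edges out of `v`) of a good edge-section `S` of a bad vertex
`v`, whose union of darts is a consecutive arc within `S` while at least one of the
two parts is not itself consecutive, are replaced (in place, in the cyclic ordering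
at `v`) by four fresh pendant edges `e₁, e₂, e₃, e₄` (modelled as `Sum.inr 0, …,
Sum.inr 3`), with `e₁, e₃` directed into `v`, `e₂, e₄` out of `v`, weights
`w'(e₁) = w'(e₄) = 0`, `w'(e₂) = w(ℰ_out)`, `w'(e₃) = w(ℰ_in)`, and new parts
`{e₁, e₃}` and `{e₂, e₄}`.  Assuming some maximum-weight feasible set contains at
most one of the two parts, `Cut-MBW(G', w', ℰ') = Cut-MBW(G, w, ℰ)`. -/
theorem cut_reduction_rule_gadget {V E : Type*}
    (G : EmbDigraph V E) (G' : EmbDigraph (V ⊕ Fin 4) (E ⊕ Fin 4))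
    (w : E → ℚ) (hw : ∀ e, 0 ≤ w e)
    (𝓔 : Finset (Finset E)) (hpart : G.IsEdgePartition 𝓔)
    (hind : ∀ e ∈ G.edges, ¬ (G.Good (G.tail e) ∧ G.Good (G.head e)))
    (hdeg : ∀ u : V, G.Good u → (G.rot u).length = 1)
    (v : V) (hv : ¬ G.Good v) (S : Set E) (hS : G.GoodEdgeSection v S)
    (Ein Eout : Finset E) (hin : Ein ∈ 𝓔) (hout : Eout ∈ 𝓔) (hneq : Ein ≠ Eout)
    (hinS : ↑Ein ⊆ S) (houtS : ↑Eout ⊆ S)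
    (hdirIn : ∀ f ∈ Ein, G.head f = v) (hdirOut : ∀ f ∈ Eout, G.tail f = v)
    (harc : G.ArcWithin v S ↑(Ein ∪ Eout))
    (hnotarc : ¬ G.ArcWithin v S ↑Ein ∨ ¬ G.ArcWithin v S ↑Eout)
    (hopt : ∃ F : Finset E, G.CutFeasible 𝓔 F ∧ G.IsCutMBW w 𝓔 (∑ e ∈ F, w e) ∧
      ¬ (Ein ⊆ F ∧ Eout ⊆ F))
    (hE' : G'.edges = (G.edges \ (Ein ∪ Eout)).image Sum.inl ∪
      ({Sum.inr 0, Sum.inr 1, Sum.inr 2, Sum.inr 3} : Finset (E ⊕ Fin 4)))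
    (ht1 : ∀ f : E, G'.tail (Sum.inl f) = Sum.inl (G.tail f))
    (hh1 : ∀ f : E, G'.head (Sum.inl f) = Sum.inl (G.head f))
    (ht2 : ∀ k : Fin 4,
      G'.tail (Sum.inr k) = if k = 0 ∨ k = 2 then Sum.inr k else Sum.inl v)
    (hh2 : ∀ k : Fin 4,
      G'.head (Sum.inr k) = if k = 0 ∨ k = 2 then Sum.inl v else Sum.inr k)
    (hrotu : ∀ u : V, u ≠ v → ∃ n : ℕ, G'.rot (Sum.inl u) =
      ((((G.rot u).filter fun d => decide (d.1 ∉ Ein ∪ Eout)).map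
        fun d => ((Sum.inl d.1 : E ⊕ Fin 4), d.2)).rotate n))
    (hrotv : ∃ (n n' : ℕ) (A B : List (E × Bool)),
      (G.rot v).rotate n = B ++ A ∧
      (∀ d ∈ B, d.1 ∈ Ein ∪ Eout) ∧ (∀ d ∈ A, d.1 ∉ Ein ∪ Eout) ∧
      (G'.rot (Sum.inl v)).rotate n' =
        [((Sum.inr 0 : E ⊕ Fin 4), true), (Sum.inr 1, false),
          (Sum.inr 2, true), (Sum.inr 3, false)] ++
          A.map fun d => ((Sum.inl d.1 : E ⊕ Fin 4), d.2))
    (w' : E ⊕ Fin 4 → ℚ)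
    (hw'l : ∀ f : E, w' (Sum.inl f) = w f)
    (hw'1 : w' (Sum.inr 0) = 0) (hw'4 : w' (Sum.inr 3) = 0)
    (hw'2 : w' (Sum.inr 1) = ∑ f ∈ Eout, w f) (hw'3 : w' (Sum.inr 2) = ∑ f ∈ Ein, w f)
    (𝓔' : Finset (Finset (E ⊕ Fin 4)))
    (h𝓔' : 𝓔' = insert {Sum.inr 0, Sum.inr 2} (insert {Sum.inr 1, Sum.inr 3}
      (((𝓔.erase Ein).erase Eout).image (Finset.image Sum.inl)))) :
    ∀ m m' : ℚ, G.IsCutMBW w 𝓔 m → G'.IsCutMBW w' 𝓔' m' → m' = m := by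
  intro m m' hm hm'
  obtain ⟨hP1, hP2, hP3⟩ := hpart
  obtain ⟨⟨hSsub, hSinc, hSgood, hSarc⟩, hSmax⟩ := hS
  obtain ⟨nv, nv', A, B, hBA, hBmem, hAmem, hrot'v⟩ := hrotv
  have hEinE : Ein ⊆ G.edges := (hP1 Ein hin).2
  have hEoutE : Eout ⊆ G.edges := (hP1 Eout hout).2
  have hEinNe : Ein.Nonempty := (hP1 Ein hin).1
  have hEoutNe : Eout.Nonempty := (hP1 Eout hout).1
  have hdisjIO : Disjoint Ein Eout := hP2 Ein hin Eout hout hneq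
  have hEUS : ∀ f : E, f ∈ Ein ∪ Eout → f ∈ S := by
    intro f hf
    rcases Finset.mem_union.mp hf with h | h
    · exact hinS (Finset.mem_coe.mpr h)
    · exact houtS (Finset.mem_coe.mpr h)
  have hbadU : ∀ u : V, ¬ G.Good u → u ≠ v → ∀ d : E × Bool, d ∈ G.rot u →
      d.1 ∉ Ein ∪ Eout := by
    intro u hu huv d hd hmem
    have hdS : d.1 ∈ S := hEUS d.1 hmem
    have hinc := hSinc d.1 hdS
    have hgood := hSgood d.1 hdS
    obtain ⟨hde, hor⟩ := (G.mem_rot u d).mp hd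
    have huht : G.head d.1 = u ∨ G.tail d.1 = u := by
      rcases hor with ⟨_, h⟩ | ⟨_, h⟩
      · exact Or.inl h
      · exact Or.inr h
    by_cases htv : G.tail d.1 = v
    · rw [if_pos htv] at hgood
      rcases huht with h | h
      · exact hu (h ▸ hgood)
      · exact huv (by rw [← h, htv])
    · rw [if_neg htv] at hgood
      have hhv : G.head d.1 = v := by
        rcases hinc with h | h
        · exact absurd h htv
        · exact h
      rcases huht with h | h
      · exact huv (by rw [← h, hhv])
      · exact hu (h ▸ hgood)
  have hdartIn : ∀ f ∈ Ein, (f, true) ∈ G.rot v ∧ (f, false) ∉ G.rot v := by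
    intro f hf
    have hfe : f ∈ G.edges := hEinE hf
    have hhv := hdirIn f hf
    refine ⟨(G.mem_rot v (f, true)).mpr ⟨hfe, Or.inl ⟨rfl, hhv⟩⟩, ?_⟩
    intro hmem
    rcases ((G.mem_rot v (f, false)).mp hmem).2 with ⟨hc, _⟩ | ⟨_, htv⟩
    · exact absurd hc (by simp)
    · exact G.tail_ne_head f hfe (htv.trans hhv.symm)
  have hdartOut : ∀ f ∈ Eout, (f, false) ∈ G.rot v ∧ (f, true) ∉ G.rot v := by
    intro f hf
    have hfe : f ∈ G.edges := hEoutE hf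
    have htv := hdirOut f hf
    refine ⟨(G.mem_rot v (f, false)).mpr ⟨hfe, Or.inr ⟨rfl, htv⟩⟩, ?_⟩
    intro hmem
    rcases ((G.mem_rot v (f, true)).mp hmem).2 with ⟨_, hhv⟩ | ⟨hc, _⟩
    · exact G.tail_ne_head f hfe (htv.trans hhv.symm)
    · exact absurd hc (by simp)
  have hmemA : ∀ d ∈ A, d ∈ G.rot v := by
    intro d hd
    exact List.mem_rotate.mp (by rw [hBA]; exact List.mem_append.mpr (Or.inr hd))
  have hmemB : ∀ d ∈ B, d ∈ G.rot v := by
    intro d hd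
    exact List.mem_rotate.mp (by rw [hBA]; exact List.mem_append.mpr (Or.inl hd))
  have hdartB : ∀ d : E × Bool, d ∈ G.rot v → d.1 ∈ Ein ∪ Eout → d ∈ B := by
    intro d hd hEU
    have hmem : d ∈ B ++ A := by rw [← hBA]; exact List.mem_rotate.mpr hd
    rcases List.mem_append.mp hmem with h | h
    · exact h
    · exact absurd hEU (hAmem d h)
  have hGv : ∀ F : Finset E, G.VertexBimodalIn F v ↔
      CTB ((B.filter fun d => decide (d.1 ∈ F)).map Prod.snd ++
        (A.filter fun d => decide (d.1 ∈ F)).map Prod.snd) := by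
    intro F
    rw [crg_vertexBimodalIn_iff' G F v (fun d => decide (d.1 ∈ F))
      (fun d => decide_eq_decide.mpr Iff.rfl)]
    obtain ⟨mG, hmG⟩ := crg_filter_rotate (fun d => decide (d.1 ∈ F)) (G.rot v) nv
    rw [hBA, List.filter_append] at hmG
    rw [← crg_ctb_rotate (((G.rot v).filter fun d => decide (d.1 ∈ F)).map Prod.snd) mG,
      ← List.map_rotate, ← hmG, List.map_append]
  have hG'v : ∀ F' : Finset (E ⊕ Fin 4), G'.VertexBimodalIn F' (Sum.inl v) ↔
      CTB ((([((Sum.inr 0 : E ⊕ Fin 4), true), (Sum.inr 1, false), (Sum.inr 2, true),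
          (Sum.inr 3, false)]).filter fun d => decide (d.1 ∈ F')).map Prod.snd ++
        ((A.map fun d => ((Sum.inl d.1 : E ⊕ Fin 4), d.2)).filter
          fun d => decide (d.1 ∈ F')).map Prod.snd) := by
    intro F'
    rw [crg_vertexBimodalIn_iff' G' F' (Sum.inl v) (fun d => decide (d.1 ∈ F'))
      (fun d => decide_eq_decide.mpr Iff.rfl)]
    obtain ⟨mG, hmG⟩ :=
      crg_filter_rotate (fun d => decide (d.1 ∈ F')) (G'.rot (Sum.inl v)) nv'
    rw [hrot'v, List.filter_append] at hmG
    rw [← crg_ctb_rotate (((G'.rot (Sum.inl v)).filter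
        fun d => decide (d.1 ∈ F')).map Prod.snd) mG,
      ← List.map_rotate, ← hmG, List.map_append]
  have hAfil : ∀ (F : Finset E) (F' : Finset (E ⊕ Fin 4)),
      (∀ f ∈ G.edges, f ∉ Ein ∪ Eout → (f ∈ F ↔ Sum.inl f ∈ F')) →
      ((A.map fun d => ((Sum.inl d.1 : E ⊕ Fin 4), d.2)).filter
        fun d => decide (d.1 ∈ F')).map Prod.snd =
      (A.filter fun d => decide (d.1 ∈ F)).map Prod.snd := by
    intro F F' hcorr
    have h1 : A.filter ((fun d : (E ⊕ Fin 4) × Bool => decide (d.1 ∈ F')) ∘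
        (fun d : E × Bool => ((Sum.inl d.1 : E ⊕ Fin 4), d.2))) =
        A.filter fun d => decide (d.1 ∈ F) := by
      apply List.filter_congr
      intro d hd
      have hde : d.1 ∈ G.edges := ((G.mem_rot v d).mp (hmemA d hd)).1
      simp only [Function.comp]
      exact decide_eq_decide.mpr (hcorr d.1 hde (hAmem d hd)).symm
    rw [List.filter_map, h1, List.map_map]
    exact List.map_congr_left fun d _ => rfl
  have keyU : ∀ (F : Finset E) (F' : Finset (E ⊕ Fin 4)),
      (∀ f ∈ G.edges, f ∉ Ein ∪ Eout → (f ∈ F ↔ Sum.inl f ∈ F')) →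
      ∀ u : V, u ≠ v → (G.VertexBimodalIn F u ↔ G'.VertexBimodalIn F' (Sum.inl u)) := by
    intro F F' hcorr u huv
    obtain ⟨n₀, hn₀⟩ := hrotu u huv
    by_cases hgood : G.Good u
    · have hlen : (G.rot u).length = 1 := hdeg u hgood
      have h1 : G.VertexBimodalIn F u := by
        refine ⟨0, crg_isTwoBlock_len_le_one ?_⟩
        rw [List.length_map]
        exact le_trans (List.length_filter_le _ _) (by rw [List.rotate_zero, hlen])
      have h2 : G'.VertexBimodalIn F' (Sum.inl u) := by
        refine ⟨0, crg_isTwoBlock_len_le_one ?_⟩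
        rw [List.length_map]
        refine le_trans (List.length_filter_le _ _) ?_
        rw [List.rotate_zero, hn₀, List.length_rotate, List.length_map]
        exact le_trans (List.length_filter_le _ _) hlen.le
      exact iff_of_true h1 h2
    · have hflt : ((G.rot u).filter fun d => decide (d.1 ∉ Ein ∪ Eout)) = G.rot u :=
        List.filter_eq_self.mpr fun d hd => by
          simpa using hbadU u hgood huv d hd
      rw [crg_vertexBimodalIn_iff' G F u (fun d => decide (d.1 ∈ F))
        (fun d => decide_eq_decide.mpr Iff.rfl),
        crg_vertexBimodalIn_iff' G' F' (Sum.inl u) (fun d => decide (d.1 ∈ F'))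
        (fun d => decide_eq_decide.mpr Iff.rfl), hn₀, hflt]
      obtain ⟨m₁, hm₁⟩ := crg_filter_rotate (fun d => decide (d.1 ∈ F'))
        ((G.rot u).map fun d => ((Sum.inl d.1 : E ⊕ Fin 4), d.2)) n₀
      rw [hm₁, List.map_rotate, crg_ctb_rotate, List.filter_map, List.map_map]
      have h1 : (G.rot u).filter ((fun d : (E ⊕ Fin 4) × Bool => decide (d.1 ∈ F')) ∘
          (fun d : E × Bool => ((Sum.inl d.1 : E ⊕ Fin 4), d.2))) =
          (G.rot u).filter fun d => decide (d.1 ∈ F) := by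
        apply List.filter_congr
        intro d hd
        have hde : d.1 ∈ G.edges := ((G.mem_rot u d).mp hd).1
        simp only [Function.comp]
        exact decide_eq_decide.mpr (hcorr d.1 hde (hbadU u hgood huv d hd)).symm
      have h2 : ((G.rot u).filter fun d => decide (d.1 ∈ F)).map
          (Prod.snd ∘ fun d : E × Bool => ((Sum.inl d.1 : E ⊕ Fin 4), d.2)) =
          ((G.rot u).filter fun d => decide (d.1 ∈ F)).map Prod.snd :=
        List.map_congr_left fun d _ => rfl
      rw [h1, h2]
  have keyR : ∀ (F' : Finset (E ⊕ Fin 4)) (k : Fin 4),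
      G'.VertexBimodalIn F' (Sum.inr k) := by
    intro F' k
    have hlen : (G'.rot (Sum.inr k)).length ≤ 1 := by
      refine crg_length_le_one_of_all_eq (G'.rot_nodup _)
        (c := ((Sum.inr k : E ⊕ Fin 4), if k = 0 ∨ k = 2 then false else true)) ?_
      rintro ⟨d1, d2⟩ hd
      obtain ⟨hde, hor⟩ := (G'.mem_rot _ _).mp hd
      match d1 with
      | Sum.inl f =>
        exfalso
        rcases hor with ⟨_, h⟩ | ⟨_, h⟩
        · rw [hh1] at h; simp at h
        · rw [ht1] at h; simp at h
      | Sum.inr j =>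
        rcases hor with ⟨hb, h⟩ | ⟨hb, h⟩
        · rw [hh2] at h
          by_cases hj : j = 0 ∨ j = 2
          · rw [if_pos hj] at h; simp at h
          · rw [if_neg hj] at h
            have hjk : j = k := by simpa using h
            subst hjk
            rw [if_neg hj]
            simp only at hb
            rw [hb]
        · rw [ht2] at h
          by_cases hj : j = 0 ∨ j = 2
          · rw [if_pos hj] at h
            have hjk : j = k := by simpa using h
            subst hjk
            rw [if_pos hj]
            simp only at hb
            rw [hb]
          · rw [if_neg hj] at h; simp at h
    refine ⟨0, crg_isTwoBlock_len_le_one ?_⟩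
    rw [List.rotate_zero, List.length_map]
    exact le_trans (List.length_filter_le _ _) hlen
  have keyV : ∀ (F : Finset E) (F' : Finset (E ⊕ Fin 4)) (X X' : List Bool),
      (∀ f ∈ G.edges, f ∉ Ein ∪ Eout → (f ∈ F ↔ Sum.inl f ∈ F')) →
      (B.filter fun d => decide (d.1 ∈ F)).map Prod.snd = X →
      (([((Sum.inr 0 : E ⊕ Fin 4), true), (Sum.inr 1, false), (Sum.inr 2, true),
        (Sum.inr 3, false)]).filter fun d => decide (d.1 ∈ F')).map Prod.snd = X' →
      (∀ L, CTB (X ++ L) ↔ CTB (X' ++ L)) →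
      (G.VertexBimodalIn F v ↔ G'.VertexBimodalIn F' (Sum.inl v)) := by
    intro F F' X X' hcorr hX hX' hiff
    rw [hGv F, hG'v F', hX, hX', hAfil F F' hcorr]
    exact hiff _
  have keyBim : ∀ (F : Finset E) (F' : Finset (E ⊕ Fin 4)),
      (∀ f ∈ G.edges, f ∉ Ein ∪ Eout → (f ∈ F ↔ Sum.inl f ∈ F')) →
      (G.VertexBimodalIn F v ↔ G'.VertexBimodalIn F' (Sum.inl v)) →
      (G.BimodalIn F ↔ G'.BimodalIn F') := by
    intro F F' hcorr hV
    constructor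
    · intro h u'
      match u' with
      | Sum.inl u =>
        by_cases huv : u = v
        · subst huv; exact hV.mp (h u)
        · exact (keyU F F' hcorr u huv).mp (h u)
      | Sum.inr k => exact keyR F' k
    · intro h u
      by_cases huv : u = v
      · subst huv; exact hV.mpr (h (Sum.inl u))
      · exact (keyU F F' hcorr u huv).mpr (h (Sum.inl u))
  have hBin : ∀ F : Finset E, Ein ⊆ F → (∀ f ∈ Eout, f ∉ F) →
      ∃ c, 0 < c ∧
        (B.filter fun d => decide (d.1 ∈ F)).map Prod.snd = List.replicate c true := by
    intro F hFin hFout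
    have hall : ∀ x ∈ (B.filter fun d => decide (d.1 ∈ F)).map Prod.snd, x = true := by
      intro x hx
      obtain ⟨d, hd, rfl⟩ := List.mem_map.mp hx
      obtain ⟨e, b⟩ := d
      obtain ⟨hdB, hdF⟩ := List.mem_filter.mp hd
      have hdF' : e ∈ F := of_decide_eq_true hdF
      cases b with
      | true => rfl
      | false =>
        exfalso
        have hdEin : e ∈ Ein := by
          rcases Finset.mem_union.mp (hBmem _ hdB) with h | h
          · exact h
          · exact absurd hdF' (hFout e h)
        exact (hdartIn e hdEin).2 (hmemB _ hdB)
    obtain ⟨f₀, hf₀⟩ := hEinNe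
    have hf₀B : (f₀, true) ∈ B :=
      hdartB (f₀, true) (hdartIn f₀ hf₀).1 (Finset.mem_union_left _ hf₀)
    have hne : true ∈ (B.filter fun d => decide (d.1 ∈ F)).map Prod.snd :=
      List.mem_map.mpr ⟨(f₀, true),
        List.mem_filter.mpr ⟨hf₀B, decide_eq_true (hFin hf₀)⟩, rfl⟩
    exact ⟨_, List.length_pos_of_mem hne, List.eq_replicate_length.mpr hall⟩
  have hBout : ∀ F : Finset E, Eout ⊆ F → (∀ f ∈ Ein, f ∉ F) →
      ∃ c, 0 < c ∧
        (B.filter fun d => decide (d.1 ∈ F)).map Prod.snd = List.replicate c false := by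
    intro F hFout hFin
    have hall : ∀ x ∈ (B.filter fun d => decide (d.1 ∈ F)).map Prod.snd, x = false := by
      intro x hx
      obtain ⟨d, hd, rfl⟩ := List.mem_map.mp hx
      obtain ⟨e, b⟩ := d
      obtain ⟨hdB, hdF⟩ := List.mem_filter.mp hd
      have hdF' : e ∈ F := of_decide_eq_true hdF
      cases b with
      | false => rfl
      | true =>
        exfalso
        have hdEout : e ∈ Eout := by
          rcases Finset.mem_union.mp (hBmem _ hdB) with h | h
          · exact absurd hdF' (hFin e h)
          · exact h
        exact (hdartOut e hdEout).2 (hmemB _ hdB)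
    obtain ⟨f₀, hf₀⟩ := hEoutNe
    have hf₀B : (f₀, false) ∈ B :=
      hdartB (f₀, false) (hdartOut f₀ hf₀).1 (Finset.mem_union_right _ hf₀)
    have hne : false ∈ (B.filter fun d => decide (d.1 ∈ F)).map Prod.snd :=
      List.mem_map.mpr ⟨(f₀, false),
        List.mem_filter.mpr ⟨hf₀B, decide_eq_true (hFout hf₀)⟩, rfl⟩
    exact ⟨_, List.length_pos_of_mem hne, List.eq_replicate_length.mpr hall⟩
  have hBnone : ∀ F : Finset E, (∀ f ∈ Ein, f ∉ F) → (∀ f ∈ Eout, f ∉ F) →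
      (B.filter fun d => decide (d.1 ∈ F)) = [] := by
    intro F h1 h2
    refine List.filter_eq_nil_iff.mpr ?_
    intro d hd hdF
    have hdF' : d.1 ∈ F := of_decide_eq_true hdF
    rcases Finset.mem_union.mp (hBmem d hd) with h | h
    · exact h1 d.1 h hdF'
    · exact h2 d.1 h hdF'
  have hNotBoth : ∀ F' : Finset (E ⊕ Fin 4), G'.BimodalIn F' →
      ¬ ((Sum.inr 0 : E ⊕ Fin 4) ∈ F' ∧ (Sum.inr 1 : E ⊕ Fin 4) ∈ F' ∧
        (Sum.inr 2 : E ⊕ Fin 4) ∈ F' ∧ (Sum.inr 3 : E ⊕ Fin 4) ∈ F') := by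
    rintro F' hbim ⟨h0, h1, h2, h3⟩
    have hV := (hG'v F').mp (hbim (Sum.inl v))
    have hgad : (([((Sum.inr 0 : E ⊕ Fin 4), true), (Sum.inr 1, false), (Sum.inr 2, true),
        (Sum.inr 3, false)]).filter fun d => decide (d.1 ∈ F')).map Prod.snd =
        [true, false, true, false] := by
      simp [List.filter_cons, h0, h1, h2, h3]
    rw [hgad] at hV
    exact crg_not_ctb_tftf _ hV
  have hcorrGen : ∀ (F : Finset E) (GS : Finset (E ⊕ Fin 4)), (∀ f : E, Sum.inl f ∉ GS) →
      ∀ f ∈ G.edges, f ∉ Ein ∪ Eout →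
        (f ∈ F ↔ Sum.inl f ∈ (F \ (Ein ∪ Eout)).image Sum.inl ∪ GS) := by
    intro F GS hGS f hfe hfEU
    constructor
    · intro hf
      exact Finset.mem_union_left _
        (Finset.mem_image_of_mem _ (Finset.mem_sdiff.mpr ⟨hf, hfEU⟩))
    · intro hf
      rcases Finset.mem_union.mp hf with h | h
      · obtain ⟨f', hf', hff⟩ := Finset.mem_image.mp h
        obtain rfl := Sum.inl.inj hff
        exact (Finset.mem_sdiff.mp hf').1
      · exact absurd h (hGS f)
  have hsubGen : ∀ (F : Finset E), F ⊆ G.edges → ∀ GS : Finset (E ⊕ Fin 4),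
      GS ⊆ {Sum.inr 0, Sum.inr 1, Sum.inr 2, Sum.inr 3} →
      (F \ (Ein ∪ Eout)).image Sum.inl ∪ GS ⊆ G'.edges := by
    intro F hFsub GS hGSs
    rw [hE']
    refine Finset.union_subset ?_ (Finset.Subset.trans hGSs Finset.subset_union_right)
    exact Finset.Subset.trans
      (Finset.image_subset_image (Finset.sdiff_subset_sdiff hFsub (Finset.Subset.refl _)))
      Finset.subset_union_left
  have hsumGen : ∀ (F : Finset E) (GS : Finset (E ⊕ Fin 4)), (∀ f : E, Sum.inl f ∉ GS) →
      ∑ e ∈ (F \ (Ein ∪ Eout)).image Sum.inl ∪ GS, w' e =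
        (∑ f ∈ F \ (Ein ∪ Eout), w f) + ∑ e ∈ GS, w' e := by
    intro F GS hGS
    have hdisj : Disjoint ((F \ (Ein ∪ Eout)).image Sum.inl) GS := by
      rw [Finset.disjoint_left]
      intro x hx
      obtain ⟨f, _, rfl⟩ := Finset.mem_image.mp hx
      exact hGS f
    rw [Finset.sum_union hdisj, Finset.sum_image (fun a _ b _ h => Sum.inl.inj h)]
    simp [hw'l]
  have hpartGen : ∀ (F : Finset E), (∀ P ∈ 𝓔, P ⊆ F ∨ Disjoint P F) →
      ∀ GS : Finset (E ⊕ Fin 4), (∀ f : E, Sum.inl f ∉ GS) →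
      (({Sum.inr 0, Sum.inr 2} : Finset (E ⊕ Fin 4)) ⊆ GS ∨
        ∀ x ∈ ({Sum.inr 0, Sum.inr 2} : Finset (E ⊕ Fin 4)), x ∉ GS) →
      (({Sum.inr 1, Sum.inr 3} : Finset (E ⊕ Fin 4)) ⊆ GS ∨
        ∀ x ∈ ({Sum.inr 1, Sum.inr 3} : Finset (E ⊕ Fin 4)), x ∉ GS) →
      ∀ P' ∈ 𝓔', P' ⊆ (F \ (Ein ∪ Eout)).image Sum.inl ∪ GS ∨
        Disjoint P' ((F \ (Ein ∪ Eout)).image Sum.inl ∪ GS) := by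
    intro F hFparts GS hGSnoInl h02 h13 P' hP'
    rw [h𝓔', Finset.mem_insert, Finset.mem_insert] at hP'
    rcases hP' with rfl | rfl | hP'
    · rcases h02 with h | h
      · exact Or.inl (h.trans Finset.subset_union_right)
      · refine Or.inr (Finset.disjoint_left.mpr ?_)
        intro x hx hxF'
        rcases Finset.mem_union.mp hxF' with hxi | hxg
        · obtain ⟨f, _, rfl⟩ := Finset.mem_image.mp hxi
          simp at hx
        · exact h x hx hxg
    · rcases h13 with h | h
      · exact Or.inl (h.trans Finset.subset_union_right)
      · refine Or.inr (Finset.disjoint_left.mpr ?_)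
        intro x hx hxF'
        rcases Finset.mem_union.mp hxF' with hxi | hxg
        · obtain ⟨f, _, rfl⟩ := Finset.mem_image.mp hxi
          simp at hx
        · exact h x hx hxg
    · obtain ⟨P, hPmem, rfl⟩ := Finset.mem_image.mp hP'
      have hPE : P ∈ 𝓔 := Finset.mem_of_mem_erase (Finset.mem_of_mem_erase hPmem)
      have hPne_out : P ≠ Eout := Finset.ne_of_mem_erase hPmem
      have hPne_in : P ≠ Ein := Finset.ne_of_mem_erase (Finset.mem_of_mem_erase hPmem)
      have hPdisjEU : ∀ f ∈ P, f ∉ Ein ∪ Eout := by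
        intro f hf hfEU
        rcases Finset.mem_union.mp hfEU with h | h
        · exact Finset.disjoint_left.mp (hP2 P hPE Ein hin hPne_in) hf h
        · exact Finset.disjoint_left.mp (hP2 P hPE Eout hout hPne_out) hf h
      rcases hFparts P hPE with h | h
      · refine Or.inl ?_
        intro x hx
        obtain ⟨f, hf, rfl⟩ := Finset.mem_image.mp hx
        exact Finset.mem_union_left _
          (Finset.mem_image_of_mem _ (Finset.mem_sdiff.mpr ⟨h hf, hPdisjEU f hf⟩))
      · refine Or.inr (Finset.disjoint_left.mpr ?_)
        intro x hx hxF'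
        obtain ⟨f, hf, rfl⟩ := Finset.mem_image.mp hx
        rcases Finset.mem_union.mp hxF' with hxi | hxg
        · obtain ⟨f', hf', hff⟩ := Finset.mem_image.mp hxi
          obtain rfl := Sum.inl.inj hff
          exact Finset.disjoint_left.mp h hf (Finset.mem_sdiff.mp hf').1
        · exact hGSnoInl f hxg
  have hFsplitSum : ∀ (F P : Finset E), P ⊆ F → P ⊆ Ein ∪ Eout →
      ((F \ (Ein ∪ Eout)) ∪ P ⊆ F) →
      (∀ f ∈ F, f ∉ P → f ∉ Ein ∪ Eout) →
      ∑ e ∈ F, w e = (∑ f ∈ F \ (Ein ∪ Eout), w f) + ∑ f ∈ P, w f := by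
    intro F P hPF hPEU hsub hother
    have hdisj : Disjoint (F \ (Ein ∪ Eout)) P := by
      rw [Finset.disjoint_left]
      intro f hf hfP
      exact (Finset.mem_sdiff.mp hf).2 (hPEU hfP)
    rw [← Finset.sum_union hdisj]
    congr 1
    apply Finset.Subset.antisymm
    · intro f hf
      by_cases hfP : f ∈ P
      · exact Finset.mem_union_right _ hfP
      · exact Finset.mem_union_left _ (Finset.mem_sdiff.mpr ⟨hf, hother f hf hfP⟩)
    · exact hsub
  have mkF' : ∀ (F : Finset E), F ⊆ G.edges → (∀ P ∈ 𝓔, P ⊆ F ∨ Disjoint P F) →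
      G.BimodalIn F → ¬(Ein ⊆ F ∧ Eout ⊆ F) →
      ∃ F' : Finset (E ⊕ Fin 4), G'.CutFeasible 𝓔' F' ∧
        ∑ e ∈ F', w' e = ∑ e ∈ F, w e := by
    intro F hFsub hFparts hFbim hFnot
    have hdIn : Ein ⊆ F ∨ ∀ f ∈ Ein, f ∉ F := by
      rcases hFparts Ein hin with h | h
      · exact Or.inl h
      · exact Or.inr fun f hf hfF => Finset.disjoint_left.mp h hf hfF
    have hdOut : Eout ⊆ F ∨ ∀ f ∈ Eout, f ∉ F := by
      rcases hFparts Eout hout with h | h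
      · exact Or.inl h
      · exact Or.inr fun f hf hfF => Finset.disjoint_left.mp h hf hfF
    rcases hdIn with hIn | hIn <;> rcases hdOut with hOut | hOut
    · exact absurd ⟨hIn, hOut⟩ hFnot
    · refine ⟨(F \ (Ein ∪ Eout)).image Sum.inl ∪ ({Sum.inr 0, Sum.inr 2} :
        Finset (E ⊕ Fin 4)), ⟨?_, ?_, ?_⟩, ?_⟩
      · refine hsubGen F hFsub _ ?_
        intro x hx
        simp only [Finset.mem_insert, Finset.mem_singleton] at hx
        rcases hx with rfl | rfl <;> simp
      · refine hpartGen F hFparts _ (fun f => by simp) (Or.inl (Finset.Subset.refl _)) ?_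
        refine Or.inr ?_
        intro x hx hx2
        simp only [Finset.mem_insert, Finset.mem_singleton] at hx hx2
        rcases hx with rfl | rfl <;> rcases hx2 with h | h <;> simp at h
      · have hcorr := hcorrGen F ({Sum.inr 0, Sum.inr 2} : Finset (E ⊕ Fin 4))
          (fun f => by simp)
        obtain ⟨c, hc, hcrep⟩ := hBin F hIn hOut
        have hm0 : (Sum.inr 0 : E ⊕ Fin 4) ∈ (F \ (Ein ∪ Eout)).image Sum.inl ∪
            ({Sum.inr 0, Sum.inr 2} : Finset (E ⊕ Fin 4)) := by simp
        have hm2 : (Sum.inr 2 : E ⊕ Fin 4) ∈ (F \ (Ein ∪ Eout)).image Sum.inl ∪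
            ({Sum.inr 0, Sum.inr 2} : Finset (E ⊕ Fin 4)) := by simp
        have hm1 : (Sum.inr 1 : E ⊕ Fin 4) ∉ (F \ (Ein ∪ Eout)).image Sum.inl ∪
            ({Sum.inr 0, Sum.inr 2} : Finset (E ⊕ Fin 4)) := by simp
        have hm3 : (Sum.inr 3 : E ⊕ Fin 4) ∉ (F \ (Ein ∪ Eout)).image Sum.inl ∪
            ({Sum.inr 0, Sum.inr 2} : Finset (E ⊕ Fin 4)) := by simp
        have hV := keyV F _ (List.replicate c true) (List.replicate 2 true) hcorr hcrep
          (by simp [List.filter_cons, hm0, hm1, hm2, hm3])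
          (fun L => crg_ctb_rep_iff true hc (by norm_num) L)
        exact (keyBim F _ hcorr hV).mp hFbim
      · rw [hsumGen F _ (fun f => by simp),
          hFsplitSum F Ein hIn (fun f hf => Finset.mem_union_left _ hf)
            (Finset.union_subset Finset.sdiff_subset hIn)
            (fun f hf hfP hfEU => by
              rcases Finset.mem_union.mp hfEU with h | h
              · exact hfP h
              · exact hOut f h hf)]
        congr 1
        rw [Finset.sum_insert (by simp), Finset.sum_singleton, hw'1, hw'3]
        ring
    · refine ⟨(F \ (Ein ∪ Eout)).image Sum.inl ∪ ({Sum.inr 1, Sum.inr 3} :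
        Finset (E ⊕ Fin 4)), ⟨?_, ?_, ?_⟩, ?_⟩
      · refine hsubGen F hFsub _ ?_
        intro x hx
        simp only [Finset.mem_insert, Finset.mem_singleton] at hx
        rcases hx with rfl | rfl <;> simp
      · refine hpartGen F hFparts _ (fun f => by simp) ?_ (Or.inl (Finset.Subset.refl _))
        refine Or.inr ?_
        intro x hx hx2
        simp only [Finset.mem_insert, Finset.mem_singleton] at hx hx2
        rcases hx with rfl | rfl <;> rcases hx2 with h | h <;> simp at h
      · have hcorr := hcorrGen F ({Sum.inr 1, Sum.inr 3} : Finset (E ⊕ Fin 4))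
          (fun f => by simp)
        obtain ⟨c, hc, hcrep⟩ := hBout F hOut hIn
        have hm1 : (Sum.inr 1 : E ⊕ Fin 4) ∈ (F \ (Ein ∪ Eout)).image Sum.inl ∪
            ({Sum.inr 1, Sum.inr 3} : Finset (E ⊕ Fin 4)) := by simp
        have hm3 : (Sum.inr 3 : E ⊕ Fin 4) ∈ (F \ (Ein ∪ Eout)).image Sum.inl ∪
            ({Sum.inr 1, Sum.inr 3} : Finset (E ⊕ Fin 4)) := by simp
        have hm0 : (Sum.inr 0 : E ⊕ Fin 4) ∉ (F \ (Ein ∪ Eout)).image Sum.inl ∪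
            ({Sum.inr 1, Sum.inr 3} : Finset (E ⊕ Fin 4)) := by simp
        have hm2 : (Sum.inr 2 : E ⊕ Fin 4) ∉ (F \ (Ein ∪ Eout)).image Sum.inl ∪
            ({Sum.inr 1, Sum.inr 3} : Finset (E ⊕ Fin 4)) := by simp
        have hV := keyV F _ (List.replicate c false) (List.replicate 2 false) hcorr hcrep
          (by simp [List.filter_cons, hm0, hm1, hm2, hm3])
          (fun L => crg_ctb_rep_iff false hc (by norm_num) L)
        exact (keyBim F _ hcorr hV).mp hFbim
      · rw [hsumGen F _ (fun f => by simp),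
          hFsplitSum F Eout hOut (fun f hf => Finset.mem_union_right _ hf)
            (Finset.union_subset Finset.sdiff_subset hOut)
            (fun f hf hfP hfEU => by
              rcases Finset.mem_union.mp hfEU with h | h
              · exact hIn f h hf
              · exact hfP h)]
        congr 1
        rw [Finset.sum_insert (by simp), Finset.sum_singleton, hw'2, hw'4]
        ring
    · refine ⟨(F \ (Ein ∪ Eout)).image Sum.inl ∪ (∅ : Finset (E ⊕ Fin 4)),
        ⟨?_, ?_, ?_⟩, ?_⟩
      · exact hsubGen F hFsub _ (by simp)
      · exact hpartGen F hFparts _ (fun f => by simp)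
          (Or.inr (by simp)) (Or.inr (by simp))
      · have hcorr := hcorrGen F (∅ : Finset (E ⊕ Fin 4)) (fun f => by simp)
        have hmnone : ∀ k : Fin 4, (Sum.inr k : E ⊕ Fin 4) ∉
            (F \ (Ein ∪ Eout)).image Sum.inl ∪ (∅ : Finset (E ⊕ Fin 4)) := by
          intro k; simp
        have hV := keyV F _ ([] : List Bool) ([] : List Bool) hcorr
          (by rw [hBnone F hIn hOut]; rfl)
          (by simp [List.filter_cons, hmnone 0, hmnone 1, hmnone 2, hmnone 3])
          (fun L => Iff.rfl)
        exact (keyBim F _ hcorr hV).mp hFbim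
      · rw [hsumGen F _ (fun f => by simp), Finset.sum_empty]
        have hFeq : F \ (Ein ∪ Eout) = F := by
          apply Finset.Subset.antisymm Finset.sdiff_subset
          intro f hf
          refine Finset.mem_sdiff.mpr ⟨hf, ?_⟩
          intro hfEU
          rcases Finset.mem_union.mp hfEU with h | h
          · exact hIn f h hf
          · exact hOut f h hf
        rw [hFeq]
        ring
  have mkF : ∀ F' : Finset (E ⊕ Fin 4), G'.CutFeasible 𝓔' F' →
      ∃ F : Finset E, G.CutFeasible 𝓔 F ∧ ∑ e ∈ F, w e = ∑ e ∈ F', w' e := by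
    intro F' hF'feas
    obtain ⟨hF'sub, hF'parts, hF'bim⟩ := hF'feas
    have h02mem : ({Sum.inr 0, Sum.inr 2} : Finset (E ⊕ Fin 4)) ∈ 𝓔' := by
      rw [h𝓔']; exact Finset.mem_insert_self _ _
    have h13mem : ({Sum.inr 1, Sum.inr 3} : Finset (E ⊕ Fin 4)) ∈ 𝓔' := by
      rw [h𝓔']; exact Finset.mem_insert_of_mem (Finset.mem_insert_self _ _)
    have hd02 := hF'parts _ h02mem
    have hd13 := hF'parts _ h13mem
    set F₀ : Finset E := (G.edges \ (Ein ∪ Eout)).filter (fun f => Sum.inl f ∈ F')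
      with hF₀def
    have hF₀sub : F₀ ⊆ G.edges := by
      intro f hf
      exact (Finset.mem_sdiff.mp (Finset.mem_filter.mp hf).1).1
    have hF₀EU : ∀ f ∈ F₀, f ∉ Ein ∪ Eout := by
      intro f hf
      exact (Finset.mem_sdiff.mp (Finset.mem_filter.mp hf).1).2
    have hF₀mem : ∀ f : E, f ∈ F₀ ↔ (f ∈ G.edges ∧ f ∉ Ein ∪ Eout ∧ Sum.inl f ∈ F') := by
      intro f
      rw [hF₀def, Finset.mem_filter, Finset.mem_sdiff]
      tauto
    have hinlF' : ∀ f : E, Sum.inl f ∈ F' → f ∈ F₀ := by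
      intro f hf
      have hxE := hF'sub hf
      rw [hE'] at hxE
      rcases Finset.mem_union.mp hxE with hxi | hxg
      · obtain ⟨f', hf', hff⟩ := Finset.mem_image.mp hxi
        obtain rfl := Sum.inl.inj hff
        rw [hF₀mem]
        exact ⟨(Finset.mem_sdiff.mp hf').1, (Finset.mem_sdiff.mp hf').2, hf⟩
      · simp at hxg
    have hpartF : ∀ (FF : Finset E),
        (∀ f ∈ G.edges, f ∉ Ein ∪ Eout → (f ∈ FF ↔ Sum.inl f ∈ F')) →
        (Ein ⊆ FF ∨ Disjoint Ein FF) → (Eout ⊆ FF ∨ Disjoint Eout FF) →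
        ∀ P ∈ 𝓔, P ⊆ FF ∨ Disjoint P FF := by
      intro FF hcorr hEinFF hEoutFF P hP
      by_cases hPin : P = Ein
      · subst hPin; exact hEinFF
      by_cases hPout : P = Eout
      · subst hPout; exact hEoutFF
      have hPmem' : P.image Sum.inl ∈ 𝓔' := by
        rw [h𝓔']
        refine Finset.mem_insert_of_mem (Finset.mem_insert_of_mem ?_)
        exact Finset.mem_image_of_mem _
          (Finset.mem_erase.mpr ⟨hPout, Finset.mem_erase.mpr ⟨hPin, hP⟩⟩)
      have hPdisjEU : ∀ f ∈ P, f ∉ Ein ∪ Eout := by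
        intro f hf hfEU
        rcases Finset.mem_union.mp hfEU with h | h
        · exact Finset.disjoint_left.mp (hP2 P hP Ein hin hPin) hf h
        · exact Finset.disjoint_left.mp (hP2 P hP Eout hout hPout) hf h
      have hPsubE : P ⊆ G.edges := (hP1 P hP).2
      rcases hF'parts _ hPmem' with h | h
      · refine Or.inl ?_
        intro f hf
        exact (hcorr f (hPsubE hf) (hPdisjEU f hf)).mpr
          (h (Finset.mem_image_of_mem _ hf))
      · refine Or.inr (Finset.disjoint_left.mpr ?_)
        intro f hf hfFF
        exact Finset.disjoint_left.mp h (Finset.mem_image_of_mem _ hf)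
          ((hcorr f (hPsubE hf) (hPdisjEU f hf)).mp hfFF)
    rcases hd02 with h02 | h02 <;> rcases hd13 with h13 | h13
    · exfalso
      exact hNotBoth F' hF'bim
        ⟨h02 (by simp), h13 (by simp), h02 (by simp), h13 (by simp)⟩
    · have hm0 : (Sum.inr 0 : E ⊕ Fin 4) ∈ F' := h02 (by simp)
      have hm2 : (Sum.inr 2 : E ⊕ Fin 4) ∈ F' := h02 (by simp)
      have hm1 : (Sum.inr 1 : E ⊕ Fin 4) ∉ F' :=
        fun h => Finset.disjoint_left.mp h13 (by simp) h
      have hm3 : (Sum.inr 3 : E ⊕ Fin 4) ∉ F' :=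
        fun h => Finset.disjoint_left.mp h13 (by simp) h
      have hdisj0 : Disjoint F₀ Ein := Finset.disjoint_left.mpr
        (fun f hf hfi => hF₀EU f hf (Finset.mem_union_left _ hfi))
      have hEinF : Ein ⊆ F₀ ∪ Ein := Finset.subset_union_right
      have hEoutF : ∀ f ∈ Eout, f ∉ F₀ ∪ Ein := by
        intro f hf hfF
        rcases Finset.mem_union.mp hfF with h | h
        · exact hF₀EU f h (Finset.mem_union_right _ hf)
        · exact Finset.disjoint_left.mp hdisjIO h hf
      have hcorr : ∀ f ∈ G.edges, f ∉ Ein ∪ Eout → (f ∈ F₀ ∪ Ein ↔ Sum.inl f ∈ F') := by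
        intro f hfe hfEU
        constructor
        · intro hf
          rcases Finset.mem_union.mp hf with h | h
          · exact ((hF₀mem f).mp h).2.2
          · exact absurd (Finset.mem_union_left _ h) hfEU
        · intro hf
          exact Finset.mem_union_left _ (hinlF' f hf)
      refine ⟨F₀ ∪ Ein, ⟨Finset.union_subset hF₀sub hEinE, ?_, ?_⟩, ?_⟩
      · exact hpartF _ hcorr (Or.inl hEinF)
          (Or.inr (Finset.disjoint_left.mpr (fun f hf hfF => hEoutF f hf hfF)))
      · obtain ⟨c, hc, hcrep⟩ := hBin (F₀ ∪ Ein) hEinF hEoutF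
        have hV := keyV (F₀ ∪ Ein) F' (List.replicate c true) (List.replicate 2 true)
          hcorr hcrep (by simp [List.filter_cons, hm0, hm1, hm2, hm3])
          (fun L => crg_ctb_rep_iff true hc (by norm_num) L)
        exact (keyBim _ F' hcorr hV).mpr hF'bim
      · have hF'eq : F' = F₀.image Sum.inl ∪ ({Sum.inr 0, Sum.inr 2} :
            Finset (E ⊕ Fin 4)) := by
          ext x
          constructor
          · intro hx
            have hxE := hF'sub hx
            rw [hE'] at hxE
            rcases Finset.mem_union.mp hxE with hxi | hxg
            · obtain ⟨f, hf, rfl⟩ := Finset.mem_image.mp hxi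
              exact Finset.mem_union_left _ (Finset.mem_image_of_mem _ (hinlF' f hx))
            · simp only [Finset.mem_insert, Finset.mem_singleton] at hxg
              rcases hxg with rfl | rfl | rfl | rfl
              · exact Finset.mem_union_right _ (by simp)
              · exact absurd hx hm1
              · exact Finset.mem_union_right _ (by simp)
              · exact absurd hx hm3
          · intro hx
            rcases Finset.mem_union.mp hx with hxi | hxg
            · obtain ⟨f, hf, rfl⟩ := Finset.mem_image.mp hxi
              exact ((hF₀mem f).mp hf).2.2
            · simp only [Finset.mem_insert, Finset.mem_singleton] at hxg
              rcases hxg with rfl | rfl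
              · exact hm0
              · exact hm2
        have hdisj' : Disjoint (F₀.image Sum.inl)
            ({Sum.inr 0, Sum.inr 2} : Finset (E ⊕ Fin 4)) := by
          rw [Finset.disjoint_left]
          intro x hx
          obtain ⟨f, _, rfl⟩ := Finset.mem_image.mp hx
          simp
        rw [hF'eq, Finset.sum_union hdisj',
          Finset.sum_image (fun a _ b _ h => Sum.inl.inj h),
          Finset.sum_union hdisj0, Finset.sum_insert (by simp),
          Finset.sum_singleton, hw'1, hw'3]
        simp [hw'l]
    · have hm1 : (Sum.inr 1 : E ⊕ Fin 4) ∈ F' := h13 (by simp)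
      have hm3 : (Sum.inr 3 : E ⊕ Fin 4) ∈ F' := h13 (by simp)
      have hm0 : (Sum.inr 0 : E ⊕ Fin 4) ∉ F' :=
        fun h => Finset.disjoint_left.mp h02 (by simp) h
      have hm2 : (Sum.inr 2 : E ⊕ Fin 4) ∉ F' :=
        fun h => Finset.disjoint_left.mp h02 (by simp) h
      have hdisj0 : Disjoint F₀ Eout := Finset.disjoint_left.mpr
        (fun f hf hfi => hF₀EU f hf (Finset.mem_union_right _ hfi))
      have hEoutF : Eout ⊆ F₀ ∪ Eout := Finset.subset_union_right
      have hEinF : ∀ f ∈ Ein, f ∉ F₀ ∪ Eout := by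
        intro f hf hfF
        rcases Finset.mem_union.mp hfF with h | h
        · exact hF₀EU f h (Finset.mem_union_left _ hf)
        · exact Finset.disjoint_left.mp hdisjIO hf h
      have hcorr : ∀ f ∈ G.edges, f ∉ Ein ∪ Eout → (f ∈ F₀ ∪ Eout ↔ Sum.inl f ∈ F') := by
        intro f hfe hfEU
        constructor
        · intro hf
          rcases Finset.mem_union.mp hf with h | h
          · exact ((hF₀mem f).mp h).2.2
          · exact absurd (Finset.mem_union_right _ h) hfEU
        · intro hf
          exact Finset.mem_union_left _ (hinlF' f hf)
      refine ⟨F₀ ∪ Eout, ⟨Finset.union_subset hF₀sub hEoutE, ?_, ?_⟩, ?_⟩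
      · exact hpartF _ hcorr
          (Or.inr (Finset.disjoint_left.mpr (fun f hf hfF => hEinF f hf hfF)))
          (Or.inl hEoutF)
      · obtain ⟨c, hc, hcrep⟩ := hBout (F₀ ∪ Eout) hEoutF hEinF
        have hV := keyV (F₀ ∪ Eout) F' (List.replicate c false) (List.replicate 2 false)
          hcorr hcrep (by simp [List.filter_cons, hm0, hm1, hm2, hm3])
          (fun L => crg_ctb_rep_iff false hc (by norm_num) L)
        exact (keyBim _ F' hcorr hV).mpr hF'bim
      · have hF'eq : F' = F₀.image Sum.inl ∪ ({Sum.inr 1, Sum.inr 3} :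
            Finset (E ⊕ Fin 4)) := by
          ext x
          constructor
          · intro hx
            have hxE := hF'sub hx
            rw [hE'] at hxE
            rcases Finset.mem_union.mp hxE with hxi | hxg
            · obtain ⟨f, hf, rfl⟩ := Finset.mem_image.mp hxi
              exact Finset.mem_union_left _ (Finset.mem_image_of_mem _ (hinlF' f hx))
            · simp only [Finset.mem_insert, Finset.mem_singleton] at hxg
              rcases hxg with rfl | rfl | rfl | rfl
              · exact absurd hx hm0
              · exact Finset.mem_union_right _ (by simp)
              · exact absurd hx hm2
              · exact Finset.mem_union_right _ (by simp)
          · intro hx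
            rcases Finset.mem_union.mp hx with hxi | hxg
            · obtain ⟨f, hf, rfl⟩ := Finset.mem_image.mp hxi
              exact ((hF₀mem f).mp hf).2.2
            · simp only [Finset.mem_insert, Finset.mem_singleton] at hxg
              rcases hxg with rfl | rfl
              · exact hm1
              · exact hm3
        have hdisj' : Disjoint (F₀.image Sum.inl)
            ({Sum.inr 1, Sum.inr 3} : Finset (E ⊕ Fin 4)) := by
          rw [Finset.disjoint_left]
          intro x hx
          obtain ⟨f, _, rfl⟩ := Finset.mem_image.mp hx
          simp
        rw [hF'eq, Finset.sum_union hdisj',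
          Finset.sum_image (fun a _ b _ h => Sum.inl.inj h),
          Finset.sum_union hdisj0, Finset.sum_insert (by simp),
          Finset.sum_singleton, hw'2, hw'4]
        simp [hw'l]
    · have hm0 : (Sum.inr 0 : E ⊕ Fin 4) ∉ F' :=
        fun h => Finset.disjoint_left.mp h02 (by simp) h
      have hm2 : (Sum.inr 2 : E ⊕ Fin 4) ∉ F' :=
        fun h => Finset.disjoint_left.mp h02 (by simp) h
      have hm1 : (Sum.inr 1 : E ⊕ Fin 4) ∉ F' :=
        fun h => Finset.disjoint_left.mp h13 (by simp) h
      have hm3 : (Sum.inr 3 : E ⊕ Fin 4) ∉ F' :=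
        fun h => Finset.disjoint_left.mp h13 (by simp) h
      have hEinF : ∀ f ∈ Ein, f ∉ F₀ := by
        intro f hf hfF
        exact hF₀EU f hfF (Finset.mem_union_left _ hf)
      have hEoutF : ∀ f ∈ Eout, f ∉ F₀ := by
        intro f hf hfF
        exact hF₀EU f hfF (Finset.mem_union_right _ hf)
      have hcorr : ∀ f ∈ G.edges, f ∉ Ein ∪ Eout → (f ∈ F₀ ↔ Sum.inl f ∈ F') := by
        intro f hfe hfEU
        constructor
        · intro hf
          exact ((hF₀mem f).mp hf).2.2
        · intro hf
          exact hinlF' f hf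
      refine ⟨F₀, ⟨hF₀sub, ?_, ?_⟩, ?_⟩
      · exact hpartF _ hcorr
          (Or.inr (Finset.disjoint_left.mpr (fun f hf hfF => hEinF f hf hfF)))
          (Or.inr (Finset.disjoint_left.mpr (fun f hf hfF => hEoutF f hf hfF)))
      · have hV := keyV F₀ F' ([] : List Bool) ([] : List Bool) hcorr
          (by rw [hBnone F₀ hEinF hEoutF]; rfl)
          (by simp [List.filter_cons, hm0, hm1, hm2, hm3])
          (fun L => Iff.rfl)
        exact (keyBim _ F' hcorr hV).mpr hF'bim
      · have hF'eq : F' = F₀.image Sum.inl := by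
          ext x
          constructor
          · intro hx
            have hxE := hF'sub hx
            rw [hE'] at hxE
            rcases Finset.mem_union.mp hxE with hxi | hxg
            · obtain ⟨f, hf, rfl⟩ := Finset.mem_image.mp hxi
              exact Finset.mem_image_of_mem _ (hinlF' f hx)
            · simp only [Finset.mem_insert, Finset.mem_singleton] at hxg
              rcases hxg with rfl | rfl | rfl | rfl
              · exact absurd hx hm0
              · exact absurd hx hm1
              · exact absurd hx hm2
              · exact absurd hx hm3
          · intro hx
            obtain ⟨f, hf, rfl⟩ := Finset.mem_image.mp hx
            exact ((hF₀mem f).mp hf).2.2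
        rw [hF'eq, Finset.sum_image (fun a _ b _ h => Sum.inl.inj h)]
        simp [hw'l]
  obtain ⟨F₁, hF₁feas, hF₁opt, hF₁not⟩ := hopt
  have hmval : ∑ e ∈ F₁, w e = m := hF₁opt.unique hm
  obtain ⟨hF₁sub, hF₁parts, hF₁bim⟩ := hF₁feas
  have dir1 : m ≤ m' := by
    obtain ⟨F'', hfeas'', hsum''⟩ := mkF' F₁ hF₁sub hF₁parts hF₁bim hF₁not
    calc m = ∑ e ∈ F₁, w e := hmval.symm
      _ = ∑ e ∈ F'', w' e := hsum''.symm
      _ ≤ m' := hm'.2 ⟨F'', hfeas'', rfl⟩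
  have dir2 : m' ≤ m := by
    obtain ⟨F', hF'feas, hsum'⟩ := hm'.1
    obtain ⟨F, hFfeas, hsumF⟩ := mkF F' hF'feas
    calc m' = ∑ e ∈ F', w' e := hsum'.symm
      _ = ∑ e ∈ F, w e := hsumF.symm
      _ ≤ m := hm.2 ⟨F, hFfeas, rfl⟩
  exact le_antisymm dir2 dir1
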